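/- Let T be a standard Young tableau with N boxes and r rows, and let T′ be a standard Young tableau with N′ boxes and r′ rows such that r′ ≥ r and T′ is rectangular (all rows of T′ have the same length). Then for every i ≤ N, the arc set of the shuffle T′ ↦ᵢ T equals { (σ(a), σ(b)) : (a,b) ∈ arcs(T) } ∪ { (a + i, b + i) : (a,b) ∈ arcs(T′) }, where σ(x) = x if x ≤ i and σ(x) = x + N′ if x > i. -/

import Mathlib

open scoped Classical

/-- The `j`-th smallest element (0-indexed) of a finite set of naturals (default `0`). -/
noncomputable def nthSmallest (s : Finset ℕ) (j : ℕ) : ℕ := (s.sort (· ≤ ·)).getD j 0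

/-- `(R, S)` satisfies the tableau condition: `|S| ≤ |R|` and for every `j ≤ |S|`, the `j`-th
smallest element of `S` is greater than the `j`-th smallest element of `R`. -/
def TableauCond (R S : Finset ℕ) : Prop :=
  S.card ≤ R.card ∧ ∀ j < S.card, nthSmallest R j < nthSmallest S j

/-- The greedy matching of `S` into `R`: processing the elements `i` of `S` in increasing
order, `greedy R S i = max { j ∈ R : j < i and j ≠ greedy R S i' for every i' ∈ S with i' < i }`
(with value `0` when this set is empty or `i ∉ S`). -/
noncomputable def greedy (R S : Finset ℕ) (i : ℕ) : ℕ :=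
  Nat.strongRecOn i fun i ih =>
    WithBot.unbotD 0 ((R.filter fun j => j < i ∧ ∀ i' (_ : i' ∈ S) (h : i' < i), j ≠ ih i' h).max)

/-- The arcs produced by the greedy matching of `S` into `R`, as ordered pairs
`(left endpoint, right endpoint)`. -/
noncomputable def arcsOf (R S : Finset ℕ) : Finset (ℕ × ℕ) :=
  S.image fun i => (greedy R S i, i)

/-- A list of rows (bottom row first) encodes a standard Young tableau with `N` boxes:
the rows are nonempty, pairwise disjoint, partition `{1,…,N}`, and each consecutive pair of
rows satisfies the tableau condition (which forces weakly decreasing row lengths). -/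
def IsSYT (N : ℕ) (L : List (Finset ℕ)) : Prop :=
  (∀ s ∈ L, s.Nonempty) ∧
  L.Pairwise Disjoint ∧
  L.foldr (· ∪ ·) ∅ = Finset.Icc 1 N ∧
  (L.map Finset.card).Chain' (fun c c' => c' ≤ c) ∧
  L.Chain' TableauCond

/-- The arc set of the m-diagram of a tableau: the union over consecutive pairs of rows of
the arcs of the greedy matching of the upper row into the lower row. -/
noncomputable def arcsSYT (L : List (Finset ℕ)) : Finset (ℕ × ℕ) :=
  (L.zip L.tail).foldr (fun p acc => arcsOf p.1 p.2 ∪ acc) ∅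

/-- The shuffle of a tableau `L'` (with `N'` boxes) into a tableau `L` at position `i`:
row `s` of the shuffle is `{σ(x) : x ∈ L_s} ∪ {x + i : x ∈ L'_s}`, where `σ(x) = x` for
`x ≤ i` and `σ(x) = x + N'` for `x > i`. -/
noncomputable def shuffleRows (L L' : List (Finset ℕ)) (i N' : ℕ) : List (Finset ℕ) :=
  (List.range (max L.length L'.length)).map fun s =>
    ((L.getD s ∅).image fun x => if x ≤ i then x else x + N') ∪
    ((L'.getD s ∅).image fun x => x + i)

/-! ### Auxiliary lemmas -/

theorem greedy_eq (R S : Finset ℕ) (i : ℕ) :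
    greedy R S i =
      WithBot.unbotD 0 ((R.filter fun j => j < i ∧ ∀ i' ∈ S, i' < i → j ≠ greedy R S i').max) := by
  unfold greedy Nat.strongRecOn
  rw [WellFounded.fix_eq]

lemma nthSmallest_mem {s : Finset ℕ} {j : ℕ} (h : j < s.card) : nthSmallest s j ∈ s := by
  have hlen : j < (s.sort (· ≤ ·)).length := by rwa [Finset.length_sort]
  rw [nthSmallest, List.getD_eq_getElem _ _ hlen]
  exact (Finset.mem_sort _).1 (List.getElem_mem hlen)

lemma nthSmallest_strictMono {s : Finset ℕ} {j k : ℕ} (hjk : j < k) (hk : k < s.card) :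
    nthSmallest s j < nthSmallest s k := by
  have hk' : k < (s.sort (· ≤ ·)).length := by rwa [Finset.length_sort]
  have hj' : j < (s.sort (· ≤ ·)).length := lt_trans hjk hk'
  rw [nthSmallest, nthSmallest, List.getD_eq_getElem _ _ hj', List.getD_eq_getElem _ _ hk']
  have := (Finset.sortedLT_sort s).strictMono_get
    (a := ⟨j, hj'⟩) (b := ⟨k, hk'⟩) hjk
  simpa using this

lemma nthSmallest_mono {s : Finset ℕ} {j k : ℕ} (hjk : j ≤ k) (hk : k < s.card) :
    nthSmallest s j ≤ nthSmallest s k := by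
  rcases eq_or_lt_of_le hjk with rfl | h
  · exact le_rfl
  · exact le_of_lt (nthSmallest_strictMono h hk)

lemma sorted_filter_length :
    ∀ (l : List ℕ), l.Pairwise (· < ·) → ∀ (m : ℕ) (hm : m < l.length),
      (l.filter (fun y => y < l[m])).length = m := by
  intro l
  induction l with
  | nil => intro _ m hm; simp at hm
  | cons a t ih =>
    intro hl m hm
    have ha : ∀ b ∈ t, a < b := fun b hb => (List.pairwise_cons.1 hl).1 b hb
    have ht : t.Pairwise (· < ·) := (List.pairwise_cons.1 hl).2
    cases m with
    | zero =>
      simp only [List.getElem_cons_zero]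
      rw [List.length_eq_zero_iff]
      rw [List.filter_eq_nil_iff]
      intro b hb
      simp only [decide_eq_true_eq]
      rcases hb with _ | hb
      · omega
      · next hb => exact not_lt.2 (le_of_lt (ha b hb))
    | succ m =>
      have hm' : m < t.length := by simpa using hm
      simp only [List.getElem_cons_succ]
      have : a < t[m] := ha _ (List.getElem_mem hm')
      simp [List.filter_cons, this, ih ht m hm']

lemma filter_lt_card_eq {s : Finset ℕ} {x : ℕ} (hx : x ∈ s) :
    (s.filter (· < x)).card < s.card ∧ nthSmallest s ((s.filter (· < x)).card) = x := by
  set l := s.sort (· ≤ ·) with hl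
  have hmem : x ∈ l := (Finset.mem_sort _).2 hx
  obtain ⟨m, hm, hxm⟩ := List.mem_iff_getElem.1 hmem
  have hnodup : l.Nodup := s.sort_nodup _
  have hcard : (s.filter (· < x)).card = m := by
    have h1 : (l.filter (fun y => y < x)).toFinset = s.filter (· < x) := by
      rw [List.toFinset_filter]
      congr 1
      · ext y; simp
      · exact Finset.sort_toFinset s _
    have h2 : (l.filter (fun y => y < x)).length = m := by
      rw [← hxm]; exact sorted_filter_length l (Finset.sortedLT_sort s).pairwise m hm
    rw [← h1] at *
    rw [List.toFinset_card_of_nodup (hnodup.filter _), h2]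
  constructor
  · rw [hcard]; rwa [Finset.length_sort] at hm
  · rw [hcard, nthSmallest, ← hl, List.getD_eq_getElem _ _ hm, hxm]

lemma card_lt_filter {R : Finset ℕ} {x k : ℕ} (hk : k < R.card) (h : nthSmallest R k < x) :
    k < (R.filter (· < x)).card := by
  have hsub : (Finset.range (k+1)).image (nthSmallest R) ⊆ R.filter (· < x) := by
    intro y hy
    obtain ⟨j, hj, rfl⟩ := Finset.mem_image.1 hy
    rw [Finset.mem_range] at hj
    have hjk : j ≤ k := Nat.le_of_lt_succ hj
    have hj' : j < R.card := lt_of_le_of_lt hjk hk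
    exact Finset.mem_filter.2 ⟨nthSmallest_mem hj', lt_of_le_of_lt (nthSmallest_mono hjk hk) h⟩
  have hinj : Set.InjOn (nthSmallest R) (Finset.range (k+1) : Finset ℕ) := by
    intro a ha b hb hab
    simp only [Finset.coe_range, Set.mem_Iio] at ha hb
    by_contra hne
    rcases Nat.lt_or_ge a b with hlt | hge
    · exact absurd hab (ne_of_lt (nthSmallest_strictMono hlt (lt_of_le_of_lt (Nat.le_of_lt_succ hb) hk)))
    · have : b < a := lt_of_le_of_ne hge (fun e => hne e.symm)
      exact absurd hab.symm (ne_of_lt (nthSmallest_strictMono this (lt_of_le_of_lt (Nat.le_of_lt_succ ha) hk)))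
  calc k < k + 1 := Nat.lt_succ_self k
    _ = ((Finset.range (k+1)).image (nthSmallest R)).card := by
        rw [Finset.card_image_of_injOn hinj, Finset.card_range]
    _ ≤ (R.filter (· < x)).card := Finset.card_le_card hsub

lemma greedy_spec {R S : Finset ℕ} (h : TableauCond R S) :
    ∀ x ∈ S, greedy R S x ∈ R ∧ greedy R S x < x ∧
      ∀ x' ∈ S, x' < x → greedy R S x ≠ greedy R S x' := by
  intro x hx
  set F := R.filter (fun j => j < x ∧ ∀ x' ∈ S, x' < x → j ≠ greedy R S x') with hF
  have hFne : F.Nonempty := by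
    set k := (S.filter (· < x)).card with hk
    obtain ⟨hkS, hnth⟩ := filter_lt_card_eq hx
    have hkR : k < R.card := lt_of_lt_of_le hkS h.1
    have hRk : k < (R.filter (· < x)).card := by
      apply card_lt_filter hkR
      have := h.2 k hkS
      rwa [hnth] at this
    have himg : ((S.filter (· < x)).image (greedy R S)).card ≤ k :=
      le_trans (Finset.card_image_le) le_rfl
    have hsub : (R.filter (· < x)) \ ((S.filter (· < x)).image (greedy R S)) ⊆ F := by
      intro j hj
      obtain ⟨hj1, hj2⟩ := Finset.mem_sdiff.1 hj
      obtain ⟨hjR, hjx⟩ := Finset.mem_filter.1 hj1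
      refine Finset.mem_filter.2 ⟨hjR, hjx, ?_⟩
      intro x' hx' hx'x hcontra
      exact hj2 (Finset.mem_image.2 ⟨x', Finset.mem_filter.2 ⟨hx', hx'x⟩, hcontra.symm⟩)
    have hge := Finset.le_card_sdiff ((S.filter (· < x)).image (greedy R S)) (R.filter (· < x))
    have : 0 < ((R.filter (· < x)) \ ((S.filter (· < x)).image (greedy R S))).card := by omega
    obtain ⟨j, hj⟩ := Finset.card_pos.1 this
    exact ⟨j, hsub hj⟩
  have hmem : greedy R S x ∈ F := by
    rw [greedy_eq]
    obtain ⟨a, ha⟩ := Finset.max_of_nonempty hFne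
    rw [← hF, ha]
    exact Finset.mem_of_max ha
  obtain ⟨h1, h2, h3⟩ := Finset.mem_filter.1 hmem
  exact ⟨h1, h2, h3⟩

lemma greedy_zero_or (R S : Finset ℕ) (x : ℕ) :
    greedy R S x = 0 ∨ greedy R S x < x := by
  rw [greedy_eq]
  rcases Finset.eq_empty_or_nonempty
    (R.filter fun j => j < x ∧ ∀ i' ∈ S, i' < x → j ≠ greedy R S i') with he | hne
  · left; rw [he]; simp
  · right
    obtain ⟨a, ha⟩ := Finset.max_of_nonempty hne
    rw [ha]
    have := Finset.mem_of_max ha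
    exact (Finset.mem_filter.1 this).2.1

lemma greedy_inj {R S : Finset ℕ} (h : TableauCond R S) {a b : ℕ}
    (ha : a ∈ S) (hb : b ∈ S) (hne : a ≠ b) : greedy R S a ≠ greedy R S b := by
  rcases Nat.lt_or_ge a b with hlt | hge
  · exact fun e => (greedy_spec h b hb).2.2 a ha hlt e.symm
  · exact (greedy_spec h a ha).2.2 b hb (lt_of_le_of_ne hge (Ne.symm hne))

lemma greedy_surj {R S : Finset ℕ} (h : TableauCond R S) (hcard : R.card = S.card) :
    S.image (greedy R S) = R := by
  apply Finset.eq_of_subset_of_card_le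
  · intro j hj
    obtain ⟨x, hx, rfl⟩ := Finset.mem_image.1 hj
    exact (greedy_spec h x hx).1
  · rw [Finset.card_image_of_injOn (fun a ha b hb hne => by
      by_contra hab
      exact greedy_inj h (by simpa using ha) (by simpa using hb) hab hne)]
    exact le_of_eq hcard

lemma max_union_eq {A C : Finset ℕ} (hsub : C ⊆ A) (h : ∀ a ∈ A, ∃ c ∈ C, a ≤ c) :
    A.max = C.max := by
  apply le_antisymm
  · apply Finset.max_le
    intro a ha
    obtain ⟨c, hc, hac⟩ := h a ha
    exact le_trans (WithBot.coe_le_coe.2 hac) (Finset.le_max hc)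
  · exact Finset.max_mono hsub

lemma unbot'_max_image {f : ℕ → ℕ} (hf : Monotone f) (hf0 : f 0 = 0) (s : Finset ℕ) :
    WithBot.unbotD 0 ((s.image f).max) = f (WithBot.unbotD 0 (s.max)) := by
  rcases s.eq_empty_or_nonempty with rfl | hs
  · simp [hf0]
  · have h1 : (s.image f).Nonempty := hs.image f
    rw [← Finset.coe_max' h1, ← Finset.coe_max' hs]
    simp only [WithBot.unbotD_coe]
    exact Finset.max'_image hf s h1

lemma unbot'_max_image' {f : ℕ → ℕ} (hf : Monotone f) {s : Finset ℕ} (hs : s.Nonempty) :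
    WithBot.unbotD 0 ((s.image f).max) = f (WithBot.unbotD 0 (s.max)) := by
  have h1 : (s.image f).Nonempty := hs.image f
  rw [← Finset.coe_max' h1, ← Finset.coe_max' hs]
  simp only [WithBot.unbotD_coe]
  exact Finset.max'_image hf s h1

/-! ### The shift map σ and merged rows -/

def sig (i N' x : ℕ) : ℕ := if x ≤ i then x else x + N'

noncomputable def mrow (i N' : ℕ) (R R' : Finset ℕ) : Finset ℕ :=
  R.image (sig i N') ∪ R'.image (· + i)

lemma sig_strictMono (i N' : ℕ) : StrictMono (sig i N') := by
  intro a b h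
  unfold sig
  split_ifs <;> omega

lemma sig_inj (i N' : ℕ) : Function.Injective (sig i N') := (sig_strictMono i N').injective

lemma sig_zero (i N' : ℕ) : sig i N' 0 = 0 := by simp [sig]

lemma sig_of_le {i N' x : ℕ} (h : x ≤ i) : sig i N' x = x := by simp [sig, h]

lemma sig_of_gt {i N' x : ℕ} (h : i < x) : sig i N' x = x + N' := by
  simp [sig, Nat.not_le.2 h]

lemma mem_mrow {i N' : ℕ} {R R' : Finset ℕ} {m : ℕ} :
    m ∈ mrow i N' R R' ↔ (∃ r ∈ R, sig i N' r = m) ∨ ∃ r' ∈ R', r' + i = m := by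
  simp [mrow, Finset.mem_union, Finset.mem_image]
lemma merge_greedy (i N' : ℕ) (R S R' S' : Finset ℕ)
    (hR' : R' ⊆ Finset.Icc 1 N') (hS' : S' ⊆ Finset.Icc 1 N')
    (hcond' : TableauCond R' S') (hcard : R'.card = S'.card) :
    ∀ n : ℕ,
      (∀ y ∈ S, sig i N' y = n →
        greedy (mrow i N' R R') (mrow i N' S S') n = sig i N' (greedy R S y)) ∧
      (∀ x ∈ S', x + i = n →
        greedy (mrow i N' R R') (mrow i N' S S') n = greedy R' S' x + i) := by
  intro n
  induction n using Nat.strong_induction_on with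
  | _ n ih =>
  have hg'spec := greedy_spec hcond'
  have hg'bd : ∀ x ∈ S', 1 ≤ greedy R' S' x ∧ greedy R' S' x ≤ N' := fun x hx =>
    Finset.mem_Icc.1 (hR' (hg'spec x hx).1)
  have hS'bd : ∀ x ∈ S', 1 ≤ x ∧ x ≤ N' := fun x hx => Finset.mem_Icc.1 (hS' hx)
  have hR'bd : ∀ r ∈ R', 1 ≤ r ∧ r ≤ N' := fun r hr => Finset.mem_Icc.1 (hR' hr)
  constructor
  · -- part 1 : elements coming from S
    rintro y hy rfl
    by_cases hyi : y ≤ i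
    · -- small case : y ≤ i
      have hgy_le : greedy R S y ≤ i := by
        rcases greedy_zero_or R S y with h0 | hlt
        · omega
        · omega
      rw [sig_of_le (N' := N') hyi] at ih ⊢
      rw [sig_of_le hgy_le]
      rw [greedy_eq (mrow i N' R R') (mrow i N' S S') y, greedy_eq R S y]
      suffices hset :
          ((mrow i N' R R').filter fun j => j < y ∧
            ∀ i' ∈ mrow i N' S S', i' < y → j ≠ greedy (mrow i N' R R') (mrow i N' S S') i') =
          (R.filter fun j => j < y ∧ ∀ i' ∈ S, i' < y → j ≠ greedy R S i') by
        rw [hset]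
      ext j
      simp only [Finset.mem_filter]
      constructor
      · rintro ⟨hjM, hjy, hcondj⟩
        rcases mem_mrow.1 hjM with ⟨r, hr, hrj⟩ | ⟨r', hr', hrj⟩
        · -- j = sig r
          have hri : r ≤ i := by
            by_contra hri
            rw [sig_of_gt (Nat.not_le.1 hri)] at hrj
            omega
          rw [sig_of_le hri] at hrj
          subst hrj
          refine ⟨hr, hjy, ?_⟩
          intro y' hy' hy'y
          have hy'i : y' ≤ i := by omega
          have hy'M : y' ∈ mrow i N' S S' :=
            mem_mrow.2 (Or.inl ⟨y', hy', sig_of_le hy'i⟩)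
          have hgy' := hcondj y' hy'M hy'y
          have : greedy (mrow i N' R R') (mrow i N' S S') y' = sig i N' (greedy R S y') := by
            have := (ih y' (by omega)).1 y' hy' (sig_of_le hy'i)
            exact this
          rw [this] at hgy'
          have hgy'le : greedy R S y' ≤ i := by
            rcases greedy_zero_or R S y' with h0 | hlt <;> omega
          rwa [sig_of_le hgy'le] at hgy'
        · -- j = r' + i : impossible
          have := (hR'bd r' hr').1
          omega
      · rintro ⟨hjR, hjy, hcondj⟩
        refine ⟨mem_mrow.2 (Or.inl ⟨j, hjR, sig_of_le (by omega)⟩), hjy, ?_⟩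
        intro m' hm' hm'y
        rcases mem_mrow.1 hm' with ⟨y'', hy'', hyj⟩ | ⟨x', hx', hxj⟩
        · have hy''i : y'' ≤ i := by
            by_contra hc
            rw [sig_of_gt (Nat.not_le.1 hc)] at hyj
            omega
          rw [sig_of_le hy''i] at hyj
          subst hyj
          have : greedy (mrow i N' R R') (mrow i N' S S') y'' = sig i N' (greedy R S y'') :=
            (ih y'' (by omega)).1 y'' hy'' (sig_of_le hy''i)
          rw [this]
          have hgle : greedy R S y'' ≤ i := by
            rcases greedy_zero_or R S y'' with h0 | hlt <;> omega
          rw [sig_of_le hgle]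
          exact hcondj y'' hy'' hm'y
        · have := (hS'bd x' hx').1
          omega
    · -- large case : y > i
      have hyi' : i < y := Nat.not_le.1 hyi
      rw [sig_of_gt (N' := N') hyi'] at ih ⊢
      have hsurj : S'.image (greedy R' S') = R' := greedy_surj hcond' hcard
      rw [greedy_eq (mrow i N' R R') (mrow i N' S S') (y + N')]
      have hFm :
          ((mrow i N' R R').filter fun j => j < y + N' ∧
            ∀ i' ∈ mrow i N' S S', i' < y + N' →
              j ≠ greedy (mrow i N' R R') (mrow i N' S S') i') =
          (R.filter fun j => j < y ∧ ∀ i' ∈ S, i' < y → j ≠ greedy R S i').image (sig i N') := by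
        ext j
        simp only [Finset.mem_filter, Finset.mem_image]
        constructor
        · rintro ⟨hjM, hjy, hcondj⟩
          rcases mem_mrow.1 hjM with ⟨r, hr, hrj⟩ | ⟨r', hr', hrj⟩
          · -- j = sig r : show r is in the L-filter
            have hry : r < y := by
              by_cases hri : r ≤ i
              · omega
              · rw [sig_of_gt (Nat.not_le.1 hri)] at hrj; omega
            refine ⟨r, ⟨hr, hry, ?_⟩, hrj⟩
            intro y' hy' hy'y heq
            have hm' : sig i N' y' ∈ mrow i N' S S' := mem_mrow.2 (Or.inl ⟨y', hy', rfl⟩)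
            have hlt : sig i N' y' < y + N' := by
              have := sig_strictMono i N' hy'y
              rwa [sig_of_gt hyi'] at this
            have hg : greedy (mrow i N' R R') (mrow i N' S S') (sig i N' y') =
                sig i N' (greedy R S y') := (ih _ hlt).1 y' hy' rfl
            have := hcondj (sig i N' y') hm' hlt
            rw [hg] at this
            rw [← hrj, ← heq] at this
            exact this rfl
          · -- j = r' + i : impossible since r' is matched
            exfalso
            have hr'img : r' ∈ S'.image (greedy R' S') := hsurj.symm ▸ hr'
            obtain ⟨x', hx', hgx'⟩ := Finset.mem_image.1 hr'img
            have hx'bd := hS'bd x' hx'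
            have hm' : x' + i ∈ mrow i N' S S' := mem_mrow.2 (Or.inr ⟨x', hx', rfl⟩)
            have hlt : x' + i < y + N' := by omega
            have hg : greedy (mrow i N' R R') (mrow i N' S S') (x' + i) =
                greedy R' S' x' + i := (ih _ hlt).2 x' hx' rfl
            have := hcondj (x' + i) hm' hlt
            rw [hg, hgx', hrj] at this
            exact this rfl
        · rintro ⟨r, ⟨hrR, hry, hravoid⟩, rfl⟩
          refine ⟨mem_mrow.2 (Or.inl ⟨r, hrR, rfl⟩), ?_, ?_⟩
          · have := sig_strictMono i N' hry
            rwa [sig_of_gt hyi'] at this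
          · intro m' hm' hm'lt
            rcases mem_mrow.1 hm' with ⟨y'', hy'', hyj⟩ | ⟨x', hx', hxj⟩
            · subst hyj
              have hy''y : y'' < y := by
                have : sig i N' y'' < sig i N' y := by rwa [sig_of_gt hyi']
                exact (sig_strictMono i N').lt_iff_lt.1 this
              have hg : greedy (mrow i N' R R') (mrow i N' S S') (sig i N' y'') =
                  sig i N' (greedy R S y'') := (ih _ hm'lt).1 y'' hy'' rfl
              rw [hg]
              exact fun e => hravoid y'' hy'' hy''y (sig_inj i N' e)
            · subst hxj
              have hg : greedy (mrow i N' R R') (mrow i N' S S') (x' + i) =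
                  greedy R' S' x' + i := (ih _ hm'lt).2 x' hx' rfl
              rw [hg]
              have hb := hg'bd x' hx'
              unfold sig
              split_ifs with h <;> omega
      rw [hFm, unbot'_max_image (sig_strictMono i N').monotone (sig_zero i N'),
        ← greedy_eq R S y]
  · -- part 2 : elements coming from S'
    rintro x hx rfl
    have hxbd := hS'bd x hx
    have hspecx := hg'spec x hx
    rw [greedy_eq (mrow i N' R R') (mrow i N' S S') (x + i)]
    set B := R'.filter (fun j => j < x ∧ ∀ x' ∈ S', x' < x → j ≠ greedy R' S' x') with hB
    have hgB : greedy R' S' x ∈ B :=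
      Finset.mem_filter.2 ⟨hspecx.1, hspecx.2.1, hspecx.2.2⟩
    have hBne : B.Nonempty := ⟨_, hgB⟩
    have hgbd := hg'bd x hx
    set F := ((mrow i N' R R').filter fun j => j < x + i ∧
        ∀ i' ∈ mrow i N' S S', i' < x + i →
          j ≠ greedy (mrow i N' R R') (mrow i N' S S') i') with hF
    have hBsub : B.image (· + i) ⊆ F := by
      intro j hj
      obtain ⟨b, hb, rfl⟩ := Finset.mem_image.1 hj
      obtain ⟨hbR', hbx, hbavoid⟩ := Finset.mem_filter.1 hb
      have hb1 := (hR'bd b hbR').1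
      refine Finset.mem_filter.2 ⟨mem_mrow.2 (Or.inr ⟨b, hbR', rfl⟩), by omega, ?_⟩
      intro m' hm' hm'lt
      rcases mem_mrow.1 hm' with ⟨y'', hy'', hyj⟩ | ⟨x', hx', hxj⟩
      · subst hyj
        have hy''i : y'' ≤ i := by
          by_contra hc
          rw [sig_of_gt (Nat.not_le.1 hc)] at hm'lt
          omega
        rw [sig_of_le hy''i] at hm'lt ⊢
        have hg : greedy (mrow i N' R R') (mrow i N' S S') (sig i N' y'') =
            sig i N' (greedy R S y'') := (ih _ (by rwa [sig_of_le hy''i])).1 y'' hy'' rfl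
        rw [sig_of_le hy''i] at hg
        rw [hg]
        have hgle : greedy R S y'' ≤ i := by
          rcases greedy_zero_or R S y'' with h0 | hlt <;> omega
        rw [sig_of_le hgle]
        omega
      · subst hxj
        have hx'x : x' < x := by omega
        have hg : greedy (mrow i N' R R') (mrow i N' S S') (x' + i) =
            greedy R' S' x' + i := (ih _ hm'lt).2 x' hx' rfl
        rw [hg]
        have := hbavoid x' hx' hx'x
        omega
    have hbig : ∀ a ∈ F, ∃ c ∈ B.image (· + i), a ≤ c := by
      intro a ha
      obtain ⟨haM, halt, hacond⟩ := Finset.mem_filter.1 ha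
      by_cases hai : a ≤ i
      · exact ⟨greedy R' S' x + i, Finset.mem_image.2 ⟨_, hgB, rfl⟩, by omega⟩
      · refine ⟨a, ?_, le_rfl⟩
        rcases mem_mrow.1 haM with ⟨r, hr, hrj⟩ | ⟨r', hr', hrj⟩
        · exfalso
          by_cases hri : r ≤ i
          · rw [sig_of_le hri] at hrj; omega
          · rw [sig_of_gt (Nat.not_le.1 hri)] at hrj
            omega
        · subst hrj
          have hr'x : r' < x := by omega
          refine Finset.mem_image.2 ⟨r', Finset.mem_filter.2 ⟨hr', hr'x, ?_⟩, rfl⟩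
          intro x' hx' hx'x heq
          have hm' : x' + i ∈ mrow i N' S S' := mem_mrow.2 (Or.inr ⟨x', hx', rfl⟩)
          have hlt : x' + i < x + i := by omega
          have hg : greedy (mrow i N' R R') (mrow i N' S S') (x' + i) =
              greedy R' S' x' + i := (ih _ hlt).2 x' hx' rfl
          have := hacond (x' + i) hm' hlt
          rw [hg, ← heq] at this
          exact this rfl
    rw [max_union_eq hBsub hbig,
      unbot'_max_image' (fun a b hab => Nat.add_le_add_right hab i : Monotone (· + i)) hBne]
    rw [hB, ← greedy_eq R' S' x]
lemma merge_arcs (i N' : ℕ) (R S R' S' : Finset ℕ)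
    (hR' : R' ⊆ Finset.Icc 1 N') (hS' : S' ⊆ Finset.Icc 1 N')
    (hcond' : TableauCond R' S') (hcard : R'.card = S'.card) :
    arcsOf (mrow i N' R R') (mrow i N' S S') =
      (arcsOf R S).image (fun a => (sig i N' a.1, sig i N' a.2)) ∪
      (arcsOf R' S').image (fun a => (a.1 + i, a.2 + i)) := by
  unfold arcsOf
  rw [show mrow i N' S S' = S.image (sig i N') ∪ S'.image (· + i) from rfl,
    Finset.image_union]
  congr 1
  · rw [Finset.image_image, Finset.image_image]
    apply Finset.image_congr
    intro y hy
    simp only [Function.comp]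
    exact congrArg (fun t => (t, sig i N' y))
      ((merge_greedy i N' R S R' S' hR' hS' hcond' hcard _).1 y hy rfl)
  · rw [Finset.image_image, Finset.image_image]
    apply Finset.image_congr
    intro x hx
    simp only [Function.comp]
    exact congrArg (fun t => (t, x + i))
      ((merge_greedy i N' R S R' S' hR' hS' hcond' hcard _).2 x hx rfl)

lemma biUnion_range_succ (n : ℕ) (f : ℕ → Finset (ℕ × ℕ)) :
    (Finset.range (n+1)).biUnion f = f 0 ∪ (Finset.range n).biUnion (fun s => f (s+1)) := by
  ext x
  simp only [Finset.mem_biUnion, Finset.mem_union, Finset.mem_range]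
  constructor
  · rintro ⟨s, hs, hx⟩
    cases s with
    | zero => exact Or.inl hx
    | succ s => exact Or.inr ⟨s, by omega, hx⟩
  · rintro (hx | ⟨s, hs, hx⟩)
    · exact ⟨0, by omega, hx⟩
    · exact ⟨s+1, by omega, hx⟩

lemma arcsSYT_cons (a b : Finset ℕ) (t : List (Finset ℕ)) :
    arcsSYT (a :: b :: t) = arcsOf a b ∪ arcsSYT (b :: t) := rfl

lemma arcsSYT_eq (L : List (Finset ℕ)) :
    arcsSYT L = (Finset.range (L.length - 1)).biUnion
      (fun s => arcsOf (L.getD s ∅) (L.getD (s+1) ∅)) := by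
  induction L with
  | nil => simp [arcsSYT]
  | cons a t ih =>
    cases t with
    | nil => simp [arcsSYT]
    | cons b t' =>
      rw [arcsSYT_cons, ih]
      have hlen : (a :: b :: t').length - 1 = ((b :: t').length - 1) + 1 := by
        simp
      rw [hlen, biUnion_range_succ]
      congr 1

lemma subset_foldr (L : List (Finset ℕ)) (t : Finset ℕ) (ht : t ∈ L) :
    t ⊆ L.foldr (· ∪ ·) ∅ := by
  induction L with
  | nil => cases ht
  | cons a l ih =>
    rcases List.mem_cons.1 ht with rfl | ht'
    · exact Finset.subset_union_left
    · exact subset_trans (ih ht') Finset.subset_union_right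

lemma chain'_getD {L : List (Finset ℕ)} (h : L.Chain' TableauCond) {s : ℕ}
    (hs : s + 1 < L.length) :
    TableauCond (L.getD s ∅) (L.getD (s+1) ∅) := by
  have hh := List.isChain_iff_getElem.1 h s (by omega)
  rw [List.getD_eq_getElem _ _ (by omega : s < L.length), List.getD_eq_getElem _ _ hs]
  simpa using hh

lemma tableauCond_empty (R : Finset ℕ) : TableauCond R ∅ := by
  constructor
  · simp
  · intro j hj; simp at hj

lemma arcsOf_empty (R : Finset ℕ) : arcsOf R ∅ = ∅ := by simp [arcsOf]

lemma shuffleRows_getD (L L' : List (Finset ℕ)) (i N' : ℕ) {s : ℕ}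
    (hs : s < max L.length L'.length) :
    (shuffleRows L L' i N').getD s ∅ = mrow i N' (L.getD s ∅) (L'.getD s ∅) := by
  unfold shuffleRows
  have hlen : s < ((List.range (max L.length L'.length)).map
      (fun s => ((L.getD s ∅).image fun x => if x ≤ i then x else x + N') ∪
        ((L'.getD s ∅).image fun x => x + i))).length := by
    simpa using hs
  rw [List.getD_eq_getElem _ _ hlen]
  rw [List.getElem_map]
  rw [List.getElem_range]
  rfl

lemma biUnion_union_distrib (s : Finset ℕ) (f g : ℕ → Finset (ℕ × ℕ)) :
    s.biUnion (fun x => f x ∪ g x) = s.biUnion f ∪ s.biUnion g := by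
  ext x
  simp only [Finset.mem_biUnion, Finset.mem_union]
  constructor
  · rintro ⟨a, ha, hx | hx⟩
    · exact Or.inl ⟨a, ha, hx⟩
    · exact Or.inr ⟨a, ha, hx⟩
  · rintro (⟨a, ha, hx⟩ | ⟨a, ha, hx⟩)
    · exact ⟨a, ha, Or.inl hx⟩
    · exact ⟨a, ha, Or.inr hx⟩

lemma biUnion_range_shrink {m m' : ℕ} (h : m ≤ m') (f : ℕ → Finset (ℕ × ℕ))
    (hf : ∀ s, m ≤ s → f s = ∅) :
    (Finset.range m').biUnion f = (Finset.range m).biUnion f := by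
  ext x
  simp only [Finset.mem_biUnion, Finset.mem_range]
  constructor
  · rintro ⟨s, hs, hx⟩
    by_cases hsm : s < m
    · exact ⟨s, hsm, hx⟩
    · rw [hf s (by omega)] at hx
      exact absurd hx (Finset.notMem_empty x)
  · rintro ⟨s, hs, hx⟩
    exact ⟨s, by omega, hx⟩

/-- If `T'` has at least as many rows as `T` and `T'` is rectangular, then for every
`i ≤ N` the arc set of the shuffle `T' ↦ᵢ T` is
`{(σ(a), σ(b)) : (a,b) ∈ arcs(T)} ∪ {(a + i, b + i) : (a,b) ∈ arcs(T')}`,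
where `σ(x) = x` for `x ≤ i` and `σ(x) = x + N'` for `x > i`. -/
theorem shuffle_rectangular_arcs (N N' : ℕ) (L L' : List (Finset ℕ))
    (hT : IsSYT N L) (hT' : IsSYT N' L')
    (hrows : L.length ≤ L'.length)
    (hrect : ∀ s ∈ L', ∀ s' ∈ L', s.card = s'.card)
    (i : ℕ) (hi : i ≤ N) :
    arcsSYT (shuffleRows L L' i N') =
      (arcsSYT L).image (fun a =>
        ((if a.1 ≤ i then a.1 else a.1 + N'), (if a.2 ≤ i then a.2 else a.2 + N'))) ∪
      (arcsSYT L').image (fun a => (a.1 + i, a.2 + i)) := by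
  classical
  obtain ⟨hne', hdisj', hcover', hlen', hchain'⟩ := hT'
  have hmax : max L.length L'.length = L'.length := max_eq_right hrows
  have hslen : (shuffleRows L L' i N').length = L'.length := by
    simp [shuffleRows, hmax]
  rw [arcsSYT_eq (shuffleRows L L' i N'), hslen, arcsSYT_eq L, arcsSYT_eq L',
    Finset.biUnion_image, Finset.biUnion_image]
  have hstep : ∀ s ∈ Finset.range (L'.length - 1),
      arcsOf ((shuffleRows L L' i N').getD s ∅) ((shuffleRows L L' i N').getD (s+1) ∅) =
        (arcsOf (L.getD s ∅) (L.getD (s+1) ∅)).image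
          (fun a => ((if a.1 ≤ i then a.1 else a.1 + N'),
            (if a.2 ≤ i then a.2 else a.2 + N'))) ∪
        (arcsOf (L'.getD s ∅) (L'.getD (s+1) ∅)).image (fun a => (a.1 + i, a.2 + i)) := by
    intro s hs
    rw [Finset.mem_range] at hs
    have hs1 : s + 1 < L'.length := by omega
    have hs0 : s < L'.length := by omega
    rw [shuffleRows_getD L L' i N' (by omega : s < max L.length L'.length),
        shuffleRows_getD L L' i N' (by rw [hmax]; omega)]
    have hR'sub : L'.getD s ∅ ⊆ Finset.Icc 1 N' := by
      rw [List.getD_eq_getElem _ _ hs0]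
      exact hcover' ▸ subset_foldr L' _ (List.getElem_mem hs0)
    have hS'sub : L'.getD (s+1) ∅ ⊆ Finset.Icc 1 N' := by
      rw [List.getD_eq_getElem _ _ hs1]
      exact hcover' ▸ subset_foldr L' _ (List.getElem_mem hs1)
    have hcond' : TableauCond (L'.getD s ∅) (L'.getD (s+1) ∅) := chain'_getD hchain' hs1
    have hcards : (L'.getD s ∅).card = (L'.getD (s+1) ∅).card := by
      rw [List.getD_eq_getElem _ _ hs0, List.getD_eq_getElem _ _ hs1]
      exact hrect _ (List.getElem_mem hs0) _ (List.getElem_mem hs1)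
    have hmain := merge_arcs i N' (L.getD s ∅) (L.getD (s+1) ∅) (L'.getD s ∅)
      (L'.getD (s+1) ∅) hR'sub hS'sub hcond' hcards
    simpa [sig] using hmain
  rw [Finset.biUnion_congr rfl hstep, biUnion_union_distrib]
  congr 1
  apply biUnion_range_shrink (by omega : L.length - 1 ≤ L'.length - 1)
  intro s hs
  have : L.getD (s+1) ∅ = ∅ := List.getD_eq_default _ _ (by omega)
  rw [this, arcsOf_empty]
  simp
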